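/- Let φ, φ̃ ∈ L²(ℍ) have compact support, and suppose both {L_{(2k,l,m)}φ} and {L_{(2k,l,m)}φ̃} (k,l,m ∈ ℤ) are Riesz sequences. Then the reconstruction formula f = Σ_{k,l,m} ⟨f, L_{(2k,l,m)}φ̃⟩ L_{(2k,l,m)}φ holds for all f in the closed span V of {L_{(2k,l,m)}φ} if and only if ⟨φ, L_{(2k,l,m)}φ̃⟩ = δ_{(k,l,m),(0,0,0)} for all (k,l,m) ∈ ℤ³. -/

import Mathlib

open MeasureTheory

/-- Heisenberg group multiplication on ℝ³. -/
noncomputable def Hmul (a b : ℝ × ℝ × ℝ) : ℝ × ℝ × ℝ :=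
  (a.1 + b.1, a.2.1 + b.2.1, a.2.2 + b.2.2 + (b.1 * a.2.1 - b.2.1 * a.1) / 2)

/-- Heisenberg group inverse. -/
noncomputable def Hinv (a : ℝ × ℝ × ℝ) : ℝ × ℝ × ℝ := (-a.1, -a.2.1, -a.2.2)

/-- Left translation on the Heisenberg group. -/
noncomputable def LtrC (a : ℝ × ℝ × ℝ) (f : ℝ × ℝ × ℝ → ℂ) : ℝ × ℝ × ℝ → ℂ :=
  fun p => f (Hmul (Hinv a) p)

/-- The lattice translate L_{(2k,l,m)} g. -/
noncomputable def latTr (g : ℝ × ℝ × ℝ → ℂ) (j : ℤ × ℤ × ℤ) : ℝ × ℝ × ℝ → ℂ :=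
  LtrC ((2 * j.1 : ℝ), (j.2.1 : ℝ), (j.2.2 : ℝ)) g

/-- {L_{(2k,l,m)} g} is a Riesz sequence (with some bounds A, B > 0). -/
def IsRieszSeq (g : ℝ × ℝ × ℝ → ℂ) : Prop :=
  ∃ A B : ℝ, 0 < A ∧ 0 < B ∧
    ∀ (F : Finset (ℤ × ℤ × ℤ)) (c : ℤ × ℤ × ℤ → ℂ),
      A * ∑ j ∈ F, ‖c j‖ ^ 2 ≤
          (∫ p : ℝ × ℝ × ℝ, ‖∑ j ∈ F, c j * latTr g j p‖ ^ 2) ∧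
        (∫ p : ℝ × ℝ × ℝ, ‖∑ j ∈ F, c j * latTr g j p‖ ^ 2) ≤
          B * ∑ j ∈ F, ‖c j‖ ^ 2

/-- The L² inner product ⟨f, g⟩ = ∫ f ḡ. -/
noncomputable def innerH (f g : ℝ × ℝ × ℝ → ℂ) : ℂ :=
  ∫ p : ℝ × ℝ × ℝ, f p * (starRingEnd ℂ) (g p)

/-- f belongs to the closed span V of the lattice translates of φ (in the L² metric). -/
def InSpanV (φ f : ℝ × ℝ × ℝ → ℂ) : Prop :=
  ∀ ε > (0 : ℝ), ∃ (F : Finset (ℤ × ℤ × ℤ)) (c : ℤ × ℤ × ℤ → ℂ),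
    (∫ p : ℝ × ℝ × ℝ, ‖f p - ∑ j ∈ F, c j * latTr φ j p‖ ^ 2) < ε

/-- The reconstruction formula f = Σ ⟨f, L φ̃⟩ L φ, with unconditional L²-convergence. -/
def Reconstructs (φ φt f : ℝ × ℝ × ℝ → ℂ) : Prop :=
  ∀ ε > (0 : ℝ), ∃ F₀ : Finset (ℤ × ℤ × ℤ), ∀ F : Finset (ℤ × ℤ × ℤ), F₀ ⊆ F →
    (∫ p : ℝ × ℝ × ℝ,
        ‖f p - ∑ j ∈ F, innerH f (latTr φt j) * latTr φ j p‖ ^ 2) < ε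

/-! ### Auxiliary lemmas -/

open scoped InnerProductSpace

section Aux

lemma Hmul_assoc' (a b c : ℝ × ℝ × ℝ) : Hmul (Hmul a b) c = Hmul a (Hmul b c) := by
  simp only [Hmul, Prod.mk.injEq]; exact ⟨by ring, by ring, by ring⟩

lemma Hinv_Hmul_cancel (a p : ℝ × ℝ × ℝ) : Hmul (Hinv a) (Hmul a p) = p := by
  obtain ⟨x, y, z⟩ := p
  simp only [Hmul, Hinv, Prod.mk.injEq]; exact ⟨by ring, by ring, by ring⟩

lemma Hmul_Hinv_cancel (a p : ℝ × ℝ × ℝ) : Hmul a (Hmul (Hinv a) p) = p := by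
  obtain ⟨x, y, z⟩ := p
  simp only [Hmul, Hinv, Prod.mk.injEq]; exact ⟨by ring, by ring, by ring⟩

lemma continuous_Hmul (a : ℝ × ℝ × ℝ) : Continuous (Hmul a) := by
  unfold Hmul; fun_prop

/-- Left translation as a homeomorphism. -/
noncomputable def Hhomeo (a : ℝ × ℝ × ℝ) : (ℝ × ℝ × ℝ) ≃ₜ (ℝ × ℝ × ℝ) where
  toFun := Hmul a
  invFun := Hmul (Hinv a)
  left_inv := Hinv_Hmul_cancel a
  right_inv := Hmul_Hinv_cancel a
  continuous_toFun := continuous_Hmul a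
  continuous_invFun := continuous_Hmul (Hinv a)

lemma measurePreserving_Hmul (a : ℝ × ℝ × ℝ) :
    MeasurePreserving (Hmul a) (volume : Measure (ℝ × ℝ × ℝ)) volume := by
  have key : MeasurePreserving
      (fun p : ℝ × (ℝ × ℝ) =>
        (a.1 + p.1, (a.2.1 + p.2.1, a.2.2 + p.2.2 + (p.1 * a.2.1 - p.2.1 * a.1) / 2)))
      ((volume : Measure ℝ).prod (volume : Measure (ℝ × ℝ)))
      ((volume : Measure ℝ).prod (volume : Measure (ℝ × ℝ))) := by
    have h1 : MeasurePreserving (fun x : ℝ => a.1 + x) volume volume :=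
      measurePreserving_add_left volume a.1
    refine h1.skew_product (g := fun (x : ℝ) (q : ℝ × ℝ) =>
        (a.2.1 + q.1, a.2.2 + q.2 + (x * a.2.1 - q.1 * a.1) / 2)) (by fun_prop) ?_
    refine Filter.Eventually.of_forall fun x => ?_
    have h2 : MeasurePreserving
        (fun q : ℝ × ℝ => (a.2.1 + q.1, a.2.2 + q.2 + (x * a.2.1 - q.1 * a.1) / 2))
        ((volume : Measure ℝ).prod (volume : Measure ℝ))
        ((volume : Measure ℝ).prod (volume : Measure ℝ)) := by
      refine (measurePreserving_add_left volume a.2.1).skew_product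
        (g := fun (y z : ℝ) => a.2.2 + z + (x * a.2.1 - y * a.1) / 2) (by fun_prop) ?_
      refine Filter.Eventually.of_forall fun y => ?_
      have h3 : MeasurePreserving (fun z : ℝ => a.2.2 + z + (x * a.2.1 - y * a.1) / 2)
          volume volume := by
        have h4 := (measurePreserving_add_right (volume : Measure ℝ)
          ((x * a.2.1 - y * a.1) / 2)).comp
          (measurePreserving_add_left (volume : Measure ℝ) a.2.2)
        exact h4
      exact h3.map_eq
    exact h2.map_eq
  rw [show (volume : Measure (ℝ × ℝ × ℝ)) =
      (volume : Measure ℝ).prod (volume : Measure (ℝ × ℝ)) from Measure.volume_eq_prod _ _]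
  exact key

noncomputable def Hvec (j : ℤ × ℤ × ℤ) : ℝ × ℝ × ℝ :=
  ((2 * j.1 : ℝ), (j.2.1 : ℝ), (j.2.2 : ℝ))

lemma latTr_eq (g : ℝ × ℝ × ℝ → ℂ) (j : ℤ × ℤ × ℤ) : latTr g j = LtrC (Hvec j) g := rfl

lemma latTr_zero (g : ℝ × ℝ × ℝ → ℂ) : latTr g (0, 0, 0) = g := by
  funext p
  simp [latTr, LtrC, Hmul, Hinv]

lemma latTr_zero' (g : ℝ × ℝ × ℝ → ℂ) : latTr g 0 = g := latTr_zero g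

lemma integral_Hmul {G : Type*} [NormedAddCommGroup G] [NormedSpace ℝ G]
    (a : ℝ × ℝ × ℝ) (f : ℝ × ℝ × ℝ → G) :
    ∫ p, f (Hmul a p) = ∫ p, f p :=
  (measurePreserving_Hmul a).integral_comp (Hhomeo a).measurableEmbedding f

lemma memLp_LtrC {f : ℝ × ℝ × ℝ → ℂ} (hf : MemLp f 2 (volume : Measure (ℝ × ℝ × ℝ)))
    (a : ℝ × ℝ × ℝ) : MemLp (LtrC a f) 2 (volume : Measure (ℝ × ℝ × ℝ)) :=
  hf.comp_measurePreserving (measurePreserving_Hmul (Hinv a))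

lemma memLp_latTr {f : ℝ × ℝ × ℝ → ℂ} (hf : MemLp f 2 (volume : Measure (ℝ × ℝ × ℝ)))
    (j : ℤ × ℤ × ℤ) : MemLp (latTr f j) 2 (volume : Measure (ℝ × ℝ × ℝ)) :=
  memLp_LtrC hf _

/-- the lattice index arising from `⟨L_{j'}φ, L_j φ̃⟩ = ⟨φ, L_{jshift j' j} φ̃⟩`. -/
def jshift (j' j : ℤ × ℤ × ℤ) : ℤ × ℤ × ℤ :=
  (j.1 - j'.1, j.2.1 - j'.2.1, j.2.2 - j'.2.2 + (j'.1 * j.2.1 - j'.2.1 * j.1))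

lemma jshift_eq_zero_iff (j' j : ℤ × ℤ × ℤ) : jshift j' j = 0 ↔ j = j' := by
  obtain ⟨k', l', m'⟩ := j'
  obtain ⟨k, l, m⟩ := j
  simp only [jshift, ← Prod.mk_zero_zero, Prod.mk.injEq]
  constructor
  · rintro ⟨h1, h2, h3⟩
    have hk : k = k' := by omega
    have hl : l = l' := by omega
    subst hk; subst hl
    refine ⟨rfl, rfl, ?_⟩
    have : k * l - l * k = 0 := by ring
    omega
  · rintro ⟨h1, h2, h3⟩
    subst h1; subst h2; subst h3
    refine ⟨by ring, by ring, by ring⟩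

lemma Hkey (j' j : ℤ × ℤ × ℤ) :
    Hmul (Hinv (Hvec j)) (Hvec j') = Hinv (Hvec (jshift j' j)) := by
  obtain ⟨k', l', m'⟩ := j'
  obtain ⟨k, l, m⟩ := j
  simp only [Hvec, Hmul, Hinv, jshift, Prod.mk.injEq]
  refine ⟨by push_cast; ring, by push_cast; ring, by push_cast; ring⟩

lemma innerH_latTr_latTr (f g : ℝ × ℝ × ℝ → ℂ) (j' j : ℤ × ℤ × ℤ) :
    innerH (latTr f j') (latTr g j) = innerH f (latTr g (jshift j' j)) := by
  unfold innerH
  rw [← integral_Hmul (Hvec j')]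
  apply integral_congr_ae
  refine Filter.Eventually.of_forall fun q => ?_
  have h1 : latTr f j' (Hmul (Hvec j') q) = f q := by
    simp only [latTr_eq, LtrC, Hinv_Hmul_cancel]
  have h2 : latTr g j (Hmul (Hvec j') q) = latTr g (jshift j' j) q := by
    simp only [latTr_eq, LtrC]
    rw [← Hmul_assoc', Hkey]
  simp only []
  rw [h1, h2]

/-- coeFn of a finite sum of Lp elements. -/
lemma Lp_coeFn_finset_sum {α : Type*} [MeasurableSpace α] {μ : Measure α}
    {ι : Type*} (F : Finset ι) (X : ι → Lp ℂ 2 μ) :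
    (↑(∑ i ∈ F, X i) : α → ℂ) =ᵐ[μ] fun p => ∑ i ∈ F, X i p := by
  classical
  induction F using Finset.induction_on with
  | empty =>
      simp only [Finset.sum_empty]
      exact Lp.coeFn_zero ℂ 2 μ
  | insert i F' hnot ih =>
      rw [Finset.sum_insert hnot]
      filter_upwards [Lp.coeFn_add (X i) (∑ k ∈ F', X k), ih] with p h1 h2
      rw [Finset.sum_insert hnot, h1, Pi.add_apply, h2]

lemma integral_norm_sq_eq_norm_sq {α : Type*} [MeasurableSpace α] {μ : Measure α}
    {f : α → ℂ} (X : Lp ℂ 2 μ) (hae : f =ᵐ[μ] X) :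
    ∫ p, ‖f p‖ ^ 2 ∂μ = ‖X‖ ^ 2 := by
  have h1 : ∫ p, ‖f p‖ ^ 2 ∂μ = ∫ p, ‖(X : α → ℂ) p‖ ^ 2 ∂μ := by
    apply integral_congr_ae
    filter_upwards [hae] with p hp
    rw [hp]
  rw [h1]
  have h2 : (⟪X, X⟫_ℂ : ℂ) = ∫ p, ((‖(X : α → ℂ) p‖ ^ 2 : ℝ) : ℂ) ∂μ := by
    rw [L2.inner_def]
    apply integral_congr_ae
    refine Filter.Eventually.of_forall fun p => ?_
    simp [RCLike.inner_apply, RCLike.conj_mul]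
  have h4 : ∫ p, ((‖(X : α → ℂ) p‖ ^ 2 : ℝ) : ℂ) ∂μ
      = ((∫ p, ‖(X : α → ℂ) p‖ ^ 2 ∂μ : ℝ) : ℂ) :=
    integral_ofReal (𝕜 := ℂ)
  have h3 := inner_self_eq_norm_sq (𝕜 := ℂ) X
  rw [h2, h4] at h3
  rw [← h3]
  norm_num

lemma innerH_eq_inner {f g : (ℝ × ℝ × ℝ) → ℂ}
    (hf : MemLp f 2 (volume : Measure (ℝ × ℝ × ℝ)))
    (hg : MemLp g 2 (volume : Measure (ℝ × ℝ × ℝ))) :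
    innerH f g = ⟪hg.toLp g, hf.toLp f⟫_ℂ := by
  rw [innerH, L2.inner_def]
  apply integral_congr_ae
  filter_upwards [hf.coeFn_toLp, hg.coeFn_toLp] with p h1 h2
  rw [h1, h2]
  simp [RCLike.inner_apply, mul_comm]

lemma sum_toLp_ae {α : Type*} [MeasurableSpace α] {μ : Measure α} {ι : Type*}
    (F : Finset ι) (g : ι → α → ℂ) (hg : ∀ i, MemLp (g i) 2 μ) (c : ι → ℂ) :
    (↑(∑ i ∈ F, c i • (hg i).toLp (g i)) : α → ℂ) =ᵐ[μ]
      fun p => ∑ i ∈ F, c i * g i p := by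
  have h1 := Lp_coeFn_finset_sum F (fun i => c i • (hg i).toLp (g i))
  have h2 : ∀ᵐ p ∂μ, ∀ i ∈ F,
      ((c i • (hg i).toLp (g i) : Lp ℂ 2 μ) : α → ℂ) p = c i * g i p := by
    rw [Filter.eventually_all_finset]
    intro i _
    filter_upwards [Lp.coeFn_smul (c i) ((hg i).toLp (g i)), (hg i).coeFn_toLp] with p hp1 hp2
    rw [hp1, Pi.smul_apply, hp2, smul_eq_mul]
  filter_upwards [h1, h2] with p hp1 hp2
  rw [hp1]
  exact Finset.sum_congr rfl fun i hi => hp2 i hi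

end Aux

set_option maxHeartbeats 3200000 in
theorem oblique_dual_characterization (φ φt : ℝ × ℝ × ℝ → ℂ)
    (hφ : MemLp φ 2 (volume : Measure (ℝ × ℝ × ℝ)))
    (hφt : MemLp φt 2 (volume : Measure (ℝ × ℝ × ℝ)))
    (hφc : HasCompactSupport φ) (hφtc : HasCompactSupport φt)
    (hR : IsRieszSeq φ) (hRt : IsRieszSeq φt) :
    (∀ f : ℝ × ℝ × ℝ → ℂ,
        MemLp f 2 (volume : Measure (ℝ × ℝ × ℝ)) → InSpanV φ f → Reconstructs φ φt f) ↔
      (∀ j : ℤ × ℤ × ℤ, innerH φ (latTr φt j) = if j = (0, 0, 0) then 1 else 0) := by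
  classical
  constructor
  · -- reconstruction ⇒ biorthogonality
    intro hrec j0
    obtain ⟨A, B, hA, hB, hRφ⟩ := hR
    set a : ℤ × ℤ × ℤ → ℂ := fun j => innerH φ (latTr φt j) with ha
    set c : ℤ × ℤ × ℤ → ℂ := fun j => a j - if j = (0, 0, 0) then 1 else 0 with hcdef
    have hφspan : InSpanV φ φ := by
      intro ε hε
      refine ⟨{(0, 0, 0)}, fun j => if j = (0, 0, 0) then 1 else 0, ?_⟩
      have : ∀ p : ℝ × ℝ × ℝ,
          φ p - ∑ j ∈ ({((0 : ℤ), (0 : ℤ), (0 : ℤ))} : Finset (ℤ × ℤ × ℤ)),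
            (if j = (0, 0, 0) then 1 else 0) * latTr φ j p = 0 := by
        intro p
        simp [latTr_zero, latTr_zero']
      simp only [this]
      simpa using hε
    have hkey : ∀ ε > (0 : ℝ), A * ‖c j0‖ ^ 2 < ε := by
      intro ε hε
      obtain ⟨F₀, hF₀⟩ := hrec φ hφ hφspan ε hε
      set F : Finset (ℤ × ℤ × ℤ) := insert (0, 0, 0) (insert j0 F₀) with hFdef
      have hsub : F₀ ⊆ F := fun x hx => by simp [hFdef, hx]
      have h0F : ((0 : ℤ), (0 : ℤ), (0 : ℤ)) ∈ F := by simp [hFdef]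
      have hj0F : j0 ∈ F := by simp [hFdef]
      have herr := hF₀ F hsub
      have hpt : ∀ p : ℝ × ℝ × ℝ,
          φ p - ∑ j ∈ F, a j * latTr φ j p = -(∑ j ∈ F, c j * latTr φ j p) := by
        intro p
        have hδ : ∑ j ∈ F, (if j = ((0 : ℤ), (0 : ℤ), (0 : ℤ)) then (1 : ℂ) else 0)
            * latTr φ j p = φ p := by
          have : ∀ j ∈ F, (if j = ((0 : ℤ), (0 : ℤ), (0 : ℤ)) then (1 : ℂ) else 0)
              * latTr φ j p
              = if j = ((0 : ℤ), (0 : ℤ), (0 : ℤ)) then latTr φ j p else 0 := by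
            intro j _
            by_cases h : j = ((0 : ℤ), (0 : ℤ), (0 : ℤ)) <;> simp [h]
          rw [Finset.sum_congr rfl this, Finset.sum_ite_eq' F ((0 : ℤ), (0 : ℤ), (0 : ℤ))]
          have h0F' : ((0 : ℤ), (0 : ℤ), (0 : ℤ)) = (0 : ℤ × ℤ × ℤ) := rfl
          simp [h0F, h0F' ▸ h0F, latTr_zero, latTr_zero']
        have hsplit : ∑ j ∈ F, c j * latTr φ j p
            = ∑ j ∈ F, a j * latTr φ j p
              - ∑ j ∈ F, (if j = ((0 : ℤ), (0 : ℤ), (0 : ℤ)) then (1 : ℂ) else 0)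
                * latTr φ j p := by
          rw [← Finset.sum_sub_distrib]
          exact Finset.sum_congr rfl fun j _ => by rw [hcdef]; ring
        rw [hsplit, hδ]
        ring
      have hint : (∫ p : ℝ × ℝ × ℝ,
          ‖φ p - ∑ j ∈ F, innerH φ (latTr φt j) * latTr φ j p‖ ^ 2)
          = ∫ p : ℝ × ℝ × ℝ, ‖∑ j ∈ F, c j * latTr φ j p‖ ^ 2 := by
        apply integral_congr_ae
        refine Filter.Eventually.of_forall fun p => ?_
        have := hpt p
        simp only [← ha] at this ⊢
        rw [this, norm_neg]
      rw [hint] at herr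
      have hlow := (hRφ F c).1
      have hone : ‖c j0‖ ^ 2 ≤ ∑ j ∈ F, ‖c j‖ ^ 2 :=
        Finset.single_le_sum (fun j _ => sq_nonneg ‖c j‖) hj0F
      have : A * ‖c j0‖ ^ 2 ≤ A * ∑ j ∈ F, ‖c j‖ ^ 2 :=
        mul_le_mul_of_nonneg_left hone hA.le
      linarith
    have hc0 : c j0 = 0 := by
      by_contra hne
      have hpos : 0 < A * ‖c j0‖ ^ 2 := by
        have : 0 < ‖c j0‖ := norm_pos_iff.mpr hne
        positivity
      exact absurd (hkey _ hpos) (lt_irrefl _)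
    have := sub_eq_zero.mp hc0
    simpa [ha] using this
  · -- biorthogonality ⇒ reconstruction
    intro hbo f hf hfV
    obtain ⟨A, B, hA, hB, hRφ⟩ := hR
    obtain ⟨At, Bt, hAt, hBt, hRφt⟩ := hRt
    set e : ℤ × ℤ × ℤ → Lp ℂ 2 (volume : Measure (ℝ × ℝ × ℝ)) :=
      fun j => (memLp_latTr hφ j).toLp _ with he
    set et : ℤ × ℤ × ℤ → Lp ℂ 2 (volume : Measure (ℝ × ℝ × ℝ)) :=
      fun j => (memLp_latTr hφt j).toLp _ with het
    set Φ : Lp ℂ 2 (volume : Measure (ℝ × ℝ × ℝ)) := hf.toLp f with hΦ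
    -- biorthogonality in Lp form
    have hbiorth : ∀ i j : ℤ × ℤ × ℤ, ⟪et i, e j⟫_ℂ = if i = j then 1 else 0 := by
      intro i j
      have h1 : innerH (latTr φ j) (latTr φt i) = ⟪et i, e j⟫_ℂ :=
        innerH_eq_inner (memLp_latTr hφ j) (memLp_latTr hφt i)
      rw [← h1, innerH_latTr_latTr, hbo]
      have h2 := jshift_eq_zero_iff j i
      by_cases h : i = j
      · rw [if_pos (show jshift j i = ((0:ℤ),(0:ℤ),(0:ℤ)) from h2.mpr h), if_pos h]
      · rw [if_neg (show ¬ jshift j i = ((0:ℤ),(0:ℤ),(0:ℤ)) from fun hc => h (h2.mp hc)),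
          if_neg h]
    -- Riesz bounds in Lp form
    have hup : ∀ (F : Finset (ℤ × ℤ × ℤ)) (c : ℤ × ℤ × ℤ → ℂ),
        ‖∑ j ∈ F, c j • e j‖ ^ 2 ≤ B * ∑ j ∈ F, ‖c j‖ ^ 2 := by
      intro F c
      have := (hRφ F c).2
      rwa [integral_norm_sq_eq_norm_sq (∑ j ∈ F, c j • e j)
        (sum_toLp_ae F _ (memLp_latTr hφ) c).symm] at this
    have hupt : ∀ (F : Finset (ℤ × ℤ × ℤ)) (c : ℤ × ℤ × ℤ → ℂ),
        ‖∑ j ∈ F, c j • et j‖ ^ 2 ≤ Bt * ∑ j ∈ F, ‖c j‖ ^ 2 := by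
      intro F c
      have := (hRφt F c).2
      rwa [integral_norm_sq_eq_norm_sq (∑ j ∈ F, c j • et j)
        (sum_toLp_ae F _ (memLp_latTr hφt) c).symm] at this
    -- Bessel-type bound for the analysis coefficients
    have hBessel : ∀ (X : Lp ℂ 2 (volume : Measure (ℝ × ℝ × ℝ))) (F : Finset (ℤ × ℤ × ℤ)),
        ∑ i ∈ F, ‖⟪et i, X⟫_ℂ‖ ^ 2 ≤ Bt * ‖X‖ ^ 2 := by
      intro X F
      set d : ℤ × ℤ × ℤ → ℂ := fun i => ⟪et i, X⟫_ℂ with hd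
      set S : ℝ := ∑ i ∈ F, ‖d i‖ ^ 2 with hS
      have hS0 : 0 ≤ S := Finset.sum_nonneg fun i _ => sq_nonneg _
      set Y : Lp ℂ 2 (volume : Measure (ℝ × ℝ × ℝ)) := ∑ i ∈ F, d i • et i with hY
      have hYX : ⟪Y, X⟫_ℂ = (S : ℂ) := by
        rw [hY, sum_inner]
        have : ∀ i ∈ F, ⟪d i • et i, X⟫_ℂ = ((‖d i‖ : ℂ)) ^ 2 := by
          intro i _
          rw [inner_smul_left]
          exact RCLike.conj_mul (d i)
        rw [Finset.sum_congr rfl this, hS]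
        norm_cast
      have hYnorm : ‖Y‖ ^ 2 ≤ Bt * S := hupt F d
      have h5 : S ≤ ‖Y‖ * ‖X‖ := by
        have h6 := norm_inner_le_norm (𝕜 := ℂ) Y X
        rw [hYX] at h6
        simpa [Complex.norm_real, Real.norm_eq_abs, abs_of_nonneg hS0] using h6
      rcases eq_or_lt_of_le hS0 with hS0' | hS0'
      · rw [← hS0']
        positivity
      · nlinarith [norm_nonneg Y, norm_nonneg X, sq_nonneg (‖Y‖ - ‖X‖),
          mul_le_mul h5 h5 hS0 (by positivity : (0:ℝ) ≤ ‖Y‖ * ‖X‖)]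
    -- main estimate
    intro ε hε
    set Cst : ℝ := 1 + Real.sqrt (B * Bt) with hCst
    have hCpos : 0 < Cst := by positivity
    set δ : ℝ := Real.sqrt ε / (2 * Cst) with hδdef
    have hδ : 0 < δ := by
      have := Real.sqrt_pos.mpr hε
      positivity
    obtain ⟨Fg, c, hc⟩ := hfV (δ ^ 2) (by positivity)
    set G : Lp ℂ 2 (volume : Measure (ℝ × ℝ × ℝ)) := ∑ j ∈ Fg, c j • e j with hG
    have haeG : (fun p => f p - ∑ j ∈ Fg, c j * latTr φ j p) =ᵐ[volume] ↑(Φ - G) := by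
      filter_upwards [Lp.coeFn_sub Φ G, hf.coeFn_toLp,
        sum_toLp_ae Fg _ (memLp_latTr hφ) c] with p h1 h2 h3
      rw [h1, Pi.sub_apply, h2, hG, h3]
    have hG2 : ‖Φ - G‖ ^ 2 < δ ^ 2 := by
      rw [← integral_norm_sq_eq_norm_sq (Φ - G) haeG]
      exact hc
    have hGlt : ‖Φ - G‖ < δ := by
      nlinarith [norm_nonneg (Φ - G)]
    refine ⟨Fg, fun F hF => ?_⟩
    -- identify coefficients
    have hcoef : ∀ i : ℤ × ℤ × ℤ, innerH f (latTr φt i) = ⟪et i, Φ⟫_ℂ := fun i =>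
      innerH_eq_inner hf (memLp_latTr hφt i)
    set T : Lp ℂ 2 (volume : Measure (ℝ × ℝ × ℝ)) := ∑ i ∈ F, ⟪et i, Φ⟫_ℂ • e i with hT
    have haeT : (fun p => f p - ∑ i ∈ F, innerH f (latTr φt i) * latTr φ i p)
        =ᵐ[volume] ↑(Φ - T) := by
      filter_upwards [Lp.coeFn_sub Φ T, hf.coeFn_toLp,
        sum_toLp_ae F _ (memLp_latTr hφ) (fun i => innerH f (latTr φt i))] with p h1 h2 h3
      rw [h1, Pi.sub_apply, h2, hT]
      have : (∑ i ∈ F, ⟪et i, Φ⟫_ℂ • e i)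
          = ∑ i ∈ F, innerH f (latTr φt i) • e i := by
        exact Finset.sum_congr rfl fun i _ => by rw [hcoef]
      rw [this, h3]
    have hIT : (∫ p : ℝ × ℝ × ℝ,
        ‖f p - ∑ i ∈ F, innerH f (latTr φt i) * latTr φ i p‖ ^ 2) = ‖Φ - T‖ ^ 2 :=
      integral_norm_sq_eq_norm_sq (Φ - T) haeT
    -- exact reconstruction of G
    have hGi : ∀ i : ℤ × ℤ × ℤ, ⟪et i, G⟫_ℂ = if i ∈ Fg then c i else 0 := by
      intro i
      rw [hG, inner_sum]
      have : ∀ j ∈ Fg, ⟪et i, c j • e j⟫_ℂ = if j = i then c j else 0 := by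
        intro j _
        rw [inner_smul_right, hbiorth]
        by_cases h : i = j <;> simp [h, eq_comm]
      rw [Finset.sum_congr rfl this, Finset.sum_ite_eq' Fg i]
    have hGrec : ∑ i ∈ F, ⟪et i, G⟫_ℂ • e i = G := by
      have h1 : ∀ i ∈ F, ⟪et i, G⟫_ℂ • e i = if i ∈ Fg then c i • e i else 0 := by
        intro i _
        rw [hGi]
        by_cases h : i ∈ Fg <;> simp [h]
      rw [Finset.sum_congr rfl h1, Finset.sum_ite_mem,
        Finset.inter_eq_right.mpr hF, hG]
    -- split
    have hsplit : Φ - T = (Φ - G) - ∑ i ∈ F, ⟪et i, Φ - G⟫_ℂ • e i := by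
      have h1 : ∑ i ∈ F, ⟪et i, Φ - G⟫_ℂ • e i
          = T - ∑ i ∈ F, ⟪et i, G⟫_ℂ • e i := by
        rw [hT, ← Finset.sum_sub_distrib]
        exact Finset.sum_congr rfl fun i _ => by
          rw [inner_sub_right, sub_smul]
      rw [h1, hGrec]
      abel
    -- bound the correction term
    set R : Lp ℂ 2 (volume : Measure (ℝ × ℝ × ℝ)) :=
      ∑ i ∈ F, ⟪et i, Φ - G⟫_ℂ • e i with hRdef
    have h1 : ‖R‖ ^ 2 ≤ B * ∑ i ∈ F, ‖⟪et i, Φ - G⟫_ℂ‖ ^ 2 := hup F _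
    have h2 : ∑ i ∈ F, ‖⟪et i, Φ - G⟫_ℂ‖ ^ 2 ≤ Bt * ‖Φ - G‖ ^ 2 := hBessel (Φ - G) F
    have h3 : ‖R‖ ^ 2 ≤ B * Bt * ‖Φ - G‖ ^ 2 := by
      calc ‖R‖ ^ 2 ≤ B * ∑ i ∈ F, ‖⟪et i, Φ - G⟫_ℂ‖ ^ 2 := h1
        _ ≤ B * (Bt * ‖Φ - G‖ ^ 2) := mul_le_mul_of_nonneg_left h2 hB.le
        _ = B * Bt * ‖Φ - G‖ ^ 2 := by ring
    have h4 : ‖R‖ ≤ Real.sqrt (B * Bt) * ‖Φ - G‖ := by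
      have h5 : ‖R‖ ≤ Real.sqrt (B * Bt * ‖Φ - G‖ ^ 2) := by
        rw [← Real.sqrt_sq (norm_nonneg R)]
        exact Real.sqrt_le_sqrt h3
      rwa [Real.sqrt_mul (by positivity) (‖Φ - G‖ ^ 2),
        Real.sqrt_sq (norm_nonneg _)] at h5
    have h6 : ‖Φ - T‖ ≤ ‖Φ - G‖ + ‖R‖ := by
      rw [hsplit]
      exact norm_sub_le _ _
    have h7 : ‖Φ - T‖ < Cst * δ := by
      have : ‖Φ - G‖ + ‖R‖ < δ + Real.sqrt (B * Bt) * δ := by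
        have h8 : Real.sqrt (B * Bt) * ‖Φ - G‖ ≤ Real.sqrt (B * Bt) * δ :=
          mul_le_mul_of_nonneg_left hGlt.le (Real.sqrt_nonneg _)
        have h9 : ‖R‖ ≤ Real.sqrt (B * Bt) * δ := h4.trans h8
        linarith
      calc ‖Φ - T‖ ≤ ‖Φ - G‖ + ‖R‖ := h6
        _ < δ + Real.sqrt (B * Bt) * δ := this
        _ = Cst * δ := by rw [hCst]; ring
    have h10 : Cst * δ < Real.sqrt ε := by
      have hsq : 0 < Real.sqrt ε := Real.sqrt_pos.mpr hε
      have heq : Cst * δ = Real.sqrt ε / 2 := by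
        rw [hδdef]
        field_simp
      rw [heq]
      linarith
    have h11 : ‖Φ - T‖ < Real.sqrt ε := h7.trans h10
    rw [hIT]
    have := Real.sq_sqrt hε.le
    nlinarith [norm_nonneg (Φ - T)]
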